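/- Let d ≥ 1, E = EuclideanSpace ℝ (Fin d), and let σ be a rotation-invariant Borel probability measure on E with σ({0}) = 0. Let g : ℝ → ℝ be measurable with ∫ g(‖x‖)² dσ(x) < ∞. Let (Ω, 𝓕, P) be a probability space and V : Fin n → Ω → E independent random vectors (iIndepFun), each with distribution σ (Measure.map (V i) P = σ). Let w : Fin n → ℝ with ∑_i (w i)² = 1, and define T : Ω → E by T := ∑_i w i • (g(‖V i‖)/‖V i‖) • V i. Then ∫ T dP = 0, and for all coordinates p, q ∈ Fin d: ∫ T_p · T_q dP = (1/d) · (∫ g(‖x‖)² dσ(x)) if p = q, and equals 0 if p ≠ q. -/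

import Mathlib

open MeasureTheory
open scoped BigOperators

namespace SphericalScoreAux

variable {d : ℕ}

/-- The radial score function `x ↦ (g‖x‖/‖x‖) • x`. -/
noncomputable def sc (g : ℝ → ℝ) (x : EuclideanSpace ℝ (Fin d)) :
    EuclideanSpace ℝ (Fin d) :=
  (g ‖x‖ / ‖x‖) • x

lemma sc_comm (g : ℝ → ℝ)
    (O : EuclideanSpace ℝ (Fin d) ≃ₗᵢ[ℝ] EuclideanSpace ℝ (Fin d))
    (x : EuclideanSpace ℝ (Fin d)) : sc g (O x) = O (sc g x) := by
  rw [sc, sc, LinearIsometryEquiv.norm_map, LinearIsometryEquiv.map_smul]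

lemma sc_measurable {g : ℝ → ℝ} (hg : Measurable g) :
    Measurable (sc (d := d) g) :=
  ((hg.comp measurable_norm).div measurable_norm).smul measurable_id

lemma norm_sq_eq (x : EuclideanSpace ℝ (Fin d)) : ‖x‖ ^ 2 = ∑ i, (x i) ^ 2 := by
  rw [EuclideanSpace.norm_eq, Real.sq_sqrt (by positivity)]
  simp [Real.norm_eq_abs, sq_abs]

lemma abs_coord_le (x : EuclideanSpace ℝ (Fin d)) (p : Fin d) : |x p| ≤ ‖x‖ := by
  have h1 : (x p) ^ 2 ≤ ‖x‖ ^ 2 := by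
    rw [norm_sq_eq]
    exact Finset.single_le_sum (f := fun i => (x i) ^ 2)
      (fun i _ => sq_nonneg _) (Finset.mem_univ p)
  calc |x p| = Real.sqrt ((x p) ^ 2) := (Real.sqrt_sq_eq_abs _).symm
    _ ≤ Real.sqrt (‖x‖ ^ 2) := Real.sqrt_le_sqrt h1
    _ = ‖x‖ := by rw [Real.sqrt_sq (norm_nonneg _)]

lemma norm_sc_eq {g : ℝ → ℝ} {x : EuclideanSpace ℝ (Fin d)} (hx : x ≠ 0) :
    ‖sc g x‖ = |g ‖x‖| := by
  have h0 : (0 : ℝ) < ‖x‖ := norm_pos_iff.mpr hx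
  rw [sc, norm_smul, Real.norm_eq_abs, abs_div, abs_of_pos h0, div_mul_cancel₀ _ h0.ne']

/-- Sign flip of the `p`-th coordinate, as a linear isometry equivalence. -/
noncomputable def flipIso (p : Fin d) :
    EuclideanSpace ℝ (Fin d) ≃ₗᵢ[ℝ] EuclideanSpace ℝ (Fin d) where
  toLinearEquiv :=
    { toFun := fun x => WithLp.toLp 2 (fun i => if i = p then -x i else x i)
      invFun := fun x => WithLp.toLp 2 (fun i => if i = p then -x i else x i)
      left_inv := fun x => by ext i; by_cases h : i = p <;> simp [h]
      right_inv := fun x => by ext i; by_cases h : i = p <;> simp [h]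
      map_add' := fun x y => by
        ext i; by_cases h : i = p <;> simp [h, PiLp.add_apply] <;> ring
      map_smul' := fun c x => by
        ext i; by_cases h : i = p <;> simp [h, PiLp.smul_apply, smul_eq_mul] }
  norm_map' := fun x => by
    rw [EuclideanSpace.norm_eq, EuclideanSpace.norm_eq]
    congr 1
    refine Finset.sum_congr rfl fun i _ => ?_
    by_cases h : i = p <;> simp [h]

lemma flipIso_apply (p : Fin d) (x : EuclideanSpace ℝ (Fin d)) (i : Fin d) :
    flipIso p x i = if i = p then -x i else x i := rfl

/-- Swap of coordinates `p` and `q`, as a linear isometry equivalence. -/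
noncomputable def swapIso (p q : Fin d) :
    EuclideanSpace ℝ (Fin d) ≃ₗᵢ[ℝ] EuclideanSpace ℝ (Fin d) :=
  LinearIsometryEquiv.piLpCongrLeft 2 ℝ ℝ (Equiv.swap p q)

lemma swapIso_apply (p q : Fin d) (x : EuclideanSpace ℝ (Fin d)) (i : Fin d) :
    swapIso p q x i = x (Equiv.swap p q i) := by
  rw [show swapIso p q x i = x ((Equiv.swap p q).symm i) from rfl, Equiv.symm_swap]

section SigmaLemmas

lemma ae_ne_zero (σ : Measure (EuclideanSpace ℝ (Fin d)))
    (hatom : σ {0} = 0) : ∀ᵐ x ∂σ, x ≠ 0 := by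
  rw [ae_iff]
  simpa [Set.setOf_eq_eq_singleton] using hatom

/-- Integral of a composition with a measure-preserving isometry. -/
lemma integral_iso_comp (σ : Measure (EuclideanSpace ℝ (Fin d)))
    {F : Type*} [NormedAddCommGroup F] [NormedSpace ℝ F]
    (O : EuclideanSpace ℝ (Fin d) ≃ₗᵢ[ℝ] EuclideanSpace ℝ (Fin d))
    (hmap : Measure.map O σ = σ)
    {φ : EuclideanSpace ℝ (Fin d) → F} (hφ : AEStronglyMeasurable φ σ) :
    ∫ x, φ (O x) ∂σ = ∫ x, φ x ∂σ := by
  have h1 : AEStronglyMeasurable φ (Measure.map O σ) := by rw [hmap]; exact hφ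
  rw [← integral_map O.continuous.measurable.aemeasurable h1, hmap]

variable (σ : Measure (EuclideanSpace ℝ (Fin d))) [IsProbabilityMeasure σ]
  (hrot : ∀ O : EuclideanSpace ℝ (Fin d) ≃ₗᵢ[ℝ] EuclideanSpace ℝ (Fin d),
    Measure.map O σ = σ)
  (hatom : σ {0} = 0)
  (g : ℝ → ℝ) (hg : Measurable g)
  (hmom : Integrable (fun x => (g ‖x‖) ^ 2) σ)

include hrot hatom hg hmom

lemma sc_integrable : Integrable (sc g) σ := by
  have hGL2 : MemLp (fun x => g ‖x‖) 2 σ :=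
    (memLp_two_iff_integrable_sq
      (hg.comp measurable_norm).aestronglyMeasurable).2 hmom
  have hG1 : Integrable (fun x => |g ‖x‖|) σ := (hGL2.integrable one_le_two).abs
  refine hG1.mono' (sc_measurable hg).aestronglyMeasurable ?_
  filter_upwards [ae_ne_zero σ hatom] with x hx
  rw [norm_sc_eq hx]

lemma sc_prod_integrable (p q : Fin d) :
    Integrable (fun x => sc g x p * sc g x q) σ := by
  have hm : ∀ r : Fin d, Measurable fun x => sc g x r := fun r =>
    (EuclideanSpace.proj r).continuous.measurable.comp (sc_measurable hg)
  refine hmom.mono' ((hm p).aestronglyMeasurable.mul (hm q).aestronglyMeasurable) ?_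
  filter_upwards [ae_ne_zero σ hatom] with x hx
  rw [Real.norm_eq_abs, abs_mul]
  calc |sc g x p| * |sc g x q| ≤ ‖sc g x‖ * ‖sc g x‖ :=
        mul_le_mul (abs_coord_le _ _) (abs_coord_le _ _) (abs_nonneg _) (norm_nonneg _)
    _ = ‖sc g x‖ ^ 2 := (sq ‖sc g x‖).symm
    _ = (g ‖x‖) ^ 2 := by rw [norm_sc_eq hx, sq_abs]

lemma sc_mean_zero : ∫ x, sc g x ∂σ = 0 := by
  have hO := integral_iso_comp σ (LinearIsometryEquiv.neg ℝ)
    (hrot _) (sc_measurable hg).aestronglyMeasurable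
  have hneg : ∀ x : EuclideanSpace ℝ (Fin d),
      sc g ((LinearIsometryEquiv.neg ℝ) x) = -sc g x := by
    intro x
    rw [sc_comm]
    rfl
  rw [funext hneg] at hO
  rw [integral_neg] at hO
  have h2 : (2 : ℝ) • (∫ x, sc g x ∂σ) = 0 := by
    rw [two_smul]
    nth_rewrite 1 [← hO]
    exact neg_add_cancel _
  rcases smul_eq_zero.mp h2 with h | h
  · norm_num at h
  · exact h

lemma sc_coord_mean_zero (p : Fin d) : ∫ x, sc g x p ∂σ = 0 := by
  have h := (EuclideanSpace.proj (𝕜 := ℝ) p).integral_comp_comm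
    (sc_integrable σ hrot hatom g hg hmom)
  have h2 : ∫ x, sc g x p ∂σ = EuclideanSpace.proj (𝕜 := ℝ) p (∫ x, sc g x ∂σ) := h
  rw [h2, sc_mean_zero σ hrot hatom g hg hmom]
  simp

lemma sc_cov_offdiag {p q : Fin d} (hpq : p ≠ q) :
    ∫ x, sc g x p * sc g x q ∂σ = 0 := by
  have hint := sc_prod_integrable σ hrot hatom g hg hmom p q
  have h1 := integral_iso_comp σ (flipIso p) (hrot _) hint.aestronglyMeasurable
  have h2 : ∀ x : EuclideanSpace ℝ (Fin d),
      sc g (flipIso p x) p * sc g (flipIso p x) q = -(sc g x p * sc g x q) := by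
    intro x
    rw [sc_comm, flipIso_apply, flipIso_apply, if_pos rfl, if_neg hpq.symm]
    ring
  rw [funext h2, integral_neg] at h1
  linarith

lemma sc_cov_diag_eq (p q : Fin d) :
    ∫ x, sc g x p * sc g x p ∂σ = ∫ x, sc g x q * sc g x q ∂σ := by
  have hint := sc_prod_integrable σ hrot hatom g hg hmom q q
  have h1 := integral_iso_comp σ (swapIso p q) (hrot _) hint.aestronglyMeasurable
  have h2 : ∀ x : EuclideanSpace ℝ (Fin d),
      sc g (swapIso p q x) q * sc g (swapIso p q x) q = sc g x p * sc g x p := by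
    intro x
    rw [sc_comm, swapIso_apply, Equiv.swap_apply_right]
  rw [funext h2] at h1
  exact h1

lemma sc_cov_diag (hd : 1 ≤ d) (p : Fin d) :
    ∫ x, sc g x p * sc g x p ∂σ = (1 / (d : ℝ)) * ∫ x, (g ‖x‖) ^ 2 ∂σ := by
  have hsum : ∑ q : Fin d, ∫ x, sc g x q * sc g x q ∂σ = ∫ x, (g ‖x‖) ^ 2 ∂σ := by
    rw [← integral_finset_sum _ (fun q _ => sc_prod_integrable σ hrot hatom g hg hmom q q)]
    refine integral_congr_ae ?_
    filter_upwards [ae_ne_zero σ hatom] with x hx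
    calc ∑ q : Fin d, sc g x q * sc g x q = ∑ q : Fin d, (sc g x q) ^ 2 := by
          refine Finset.sum_congr rfl fun q _ => (sq _).symm
      _ = ‖sc g x‖ ^ 2 := (norm_sq_eq _).symm
      _ = (g ‖x‖) ^ 2 := by rw [norm_sc_eq hx, sq_abs]
  have hconst : ∑ q : Fin d, ∫ x, sc g x q * sc g x q ∂σ
      = (d : ℝ) * ∫ x, sc g x p * sc g x p ∂σ := by
    rw [Finset.sum_congr rfl fun q _ => sc_cov_diag_eq σ hrot hatom g hg hmom q p]
    simp [Finset.sum_const, nsmul_eq_mul]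
  have hd0 : (d : ℝ) ≠ 0 := Nat.cast_ne_zero.mpr (by omega)
  rw [hconst] at hsum
  rw [← hsum, ← mul_assoc, one_div, inv_mul_cancel₀ hd0, one_mul]

end SigmaLemmas

end SphericalScoreAux

open SphericalScoreAux ProbabilityTheory in
/-- Mean and covariance computation in the proof of Proposition 3.2: for i.i.d. random
vectors `V i` with rotation-invariant law `σ` (no atom at the origin), a square-integrable
radial score `g`, and normalized weights `w`, the statistic
`T = ∑ᵢ wᵢ (g(‖Vᵢ‖)/‖Vᵢ‖) Vᵢ` has mean `0` and covariance `d⁻¹(∫ g(‖x‖)² dσ) I_d`. -/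
theorem spherical_score_statistic_moments
    {d : ℕ} (hd : 1 ≤ d)
    (σ : Measure (EuclideanSpace ℝ (Fin d))) [IsProbabilityMeasure σ]
    (hrot : ∀ O : EuclideanSpace ℝ (Fin d) ≃ₗᵢ[ℝ] EuclideanSpace ℝ (Fin d),
      Measure.map O σ = σ)
    (hatom : σ {0} = 0)
    (g : ℝ → ℝ) (hg : Measurable g)
    (hmom : Integrable (fun x => (g ‖x‖) ^ 2) σ)
    {Ω : Type*} [MeasurableSpace Ω] (P : Measure Ω) [IsProbabilityMeasure P]
    {n : ℕ} (V : Fin n → Ω → EuclideanSpace ℝ (Fin d))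
    (hmeas : ∀ i, Measurable (V i))
    (hindep : ProbabilityTheory.iIndepFun
      V P)
    (hlaw : ∀ i, Measure.map (V i) P = σ)
    (w : Fin n → ℝ) (hw2 : ∑ i, (w i) ^ 2 = 1)
    (T : Ω → EuclideanSpace ℝ (Fin d))
    (hT : ∀ ω, T ω = ∑ i, w i • ((g ‖V i ω‖ / ‖V i ω‖) • V i ω)) :
    (∫ ω, T ω ∂P = 0) ∧
    (∀ p q : Fin d,
      (p = q →
        ∫ ω, T ω p * T ω q ∂P = (1 / (d : ℝ)) * ∫ x, (g ‖x‖) ^ 2 ∂σ) ∧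
      (p ≠ q → ∫ ω, T ω p * T ω q ∂P = 0)) := by
  classical
  have hTf : ∀ ω, T ω = ∑ i, w i • sc g (V i ω) := hT
  have hscm : Measurable (sc (d := d) g) := sc_measurable hg
  have hfc : ∀ p : Fin d, Measurable fun x => sc g x p := fun p =>
    (EuclideanSpace.proj p).continuous.measurable.comp hscm
  -- transfer of integrals from `P` to `σ`
  have htransfer : ∀ (i : Fin n) (φ : EuclideanSpace ℝ (Fin d) → ℝ),
      AEStronglyMeasurable φ σ → ∫ ω, φ (V i ω) ∂P = ∫ x, φ x ∂σ := by
    intro i φ hφ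
    rw [← hlaw i]
    exact (integral_map (hmeas i).aemeasurable (by rw [hlaw i]; exact hφ)).symm
  have htransferVec : ∀ (i : Fin n) (φ : EuclideanSpace ℝ (Fin d) → EuclideanSpace ℝ (Fin d)),
      AEStronglyMeasurable φ σ → ∫ ω, φ (V i ω) ∂P = ∫ x, φ x ∂σ := by
    intro i φ hφ
    rw [← hlaw i]
    exact (integral_map (hmeas i).aemeasurable (by rw [hlaw i]; exact hφ)).symm
  -- integrability on `Ω`
  have hVf_int : ∀ i, Integrable (fun ω => sc g (V i ω)) P := by
    intro i
    exact (integrable_map_measure (by rw [hlaw i]; exact hscm.aestronglyMeasurable)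
      (hmeas i).aemeasurable).mp
      (by rw [hlaw i]; exact sc_integrable σ hrot hatom g hg hmom)
  have hco_int : ∀ p : Fin d, Integrable (fun x => sc g x p) σ := by
    intro p
    exact (EuclideanSpace.proj (𝕜 := ℝ) p).integrable_comp
      (sc_integrable σ hrot hatom g hg hmom)
  have hX1 : ∀ (i : Fin n) (p : Fin d), Integrable (fun ω => sc g (V i ω) p) P := by
    intro i p
    exact (integrable_map_measure (by rw [hlaw i]; exact (hfc p).aestronglyMeasurable)
      (hmeas i).aemeasurable).mp (by rw [hlaw i]; exact hco_int p)
  have hprod_int : ∀ (p q : Fin d) (i j : Fin n),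
      Integrable (fun ω => sc g (V i ω) p * sc g (V j ω) q) P := by
    intro p q i j
    rcases eq_or_ne i j with rfl | hij
    · exact (integrable_map_measure
        (by rw [hlaw i]; exact ((hfc p).mul (hfc q)).aestronglyMeasurable)
        (hmeas i).aemeasurable).mp
        (by rw [hlaw i]; exact sc_prod_integrable σ hrot hatom g hg hmom p q)
    · have hind : IndepFun (fun ω => sc g (V i ω) p) (fun ω => sc g (V j ω) q) P :=
        (hindep.indepFun hij).comp (hfc p) (hfc q)
      exact hind.integrable_mul (hX1 i p) (hX1 j q)
  -- the key second-moment identity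
  have hkey : ∀ (p q : Fin d) (i j : Fin n),
      ∫ ω, sc g (V i ω) p * sc g (V j ω) q ∂P
        = if i = j then ∫ x, sc g x p * sc g x q ∂σ else 0 := by
    intro p q i j
    rcases eq_or_ne i j with rfl | hij
    · rw [if_pos rfl]
      exact htransfer i (fun x => sc g x p * sc g x q)
        ((hfc p).mul (hfc q)).aestronglyMeasurable
    · rw [if_neg hij]
      have hind : IndepFun (fun ω => sc g (V i ω) p) (fun ω => sc g (V j ω) q) P :=
        (hindep.indepFun hij).comp (hfc p) (hfc q)
      have hmul := hind.integral_mul_eq_mul_integral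
        ((hfc p).comp (hmeas i)).aestronglyMeasurable
        ((hfc q).comp (hmeas j)).aestronglyMeasurable
      have hX0 : ∫ ω, sc g (V i ω) p ∂P = 0 := by
        rw [htransfer i _ (hfc p).aestronglyMeasurable]
        exact sc_coord_mean_zero σ hrot hatom g hg hmom p
      calc ∫ ω, sc g (V i ω) p * sc g (V j ω) q ∂P
          = (∫ ω, sc g (V i ω) p ∂P) * ∫ ω, sc g (V j ω) q ∂P := hmul
        _ = 0 := by rw [hX0, zero_mul]
  -- coordinates of T
  have hTp : ∀ (ω : Ω) (p : Fin d), T ω p = ∑ i, w i * sc g (V i ω) p := by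
    intro ω p
    have h1 : T ω p = EuclideanSpace.proj (𝕜 := ℝ) p (T ω) := rfl
    rw [h1, hTf ω, map_sum]
    refine Finset.sum_congr rfl fun i _ => ?_
    rw [ContinuousLinearMap.map_smul]
    rfl
  constructor
  · -- mean zero
    have hzero : ∀ i : Fin n, ∫ ω, sc g (V i ω) ∂P = 0 := fun i => by
      rw [htransferVec i (sc g) hscm.aestronglyMeasurable,
        sc_mean_zero σ hrot hatom g hg hmom]
    have h1 : ∫ ω, T ω ∂P = ∑ i, ∫ ω, w i • sc g (V i ω) ∂P := by
      simp only [hTf]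
      exact integral_finset_sum _ (fun i _ => (hVf_int i).smul (w i))
    rw [h1]
    refine Finset.sum_eq_zero fun i _ => ?_
    rw [integral_smul, hzero i, smul_zero]
  · -- covariance
    intro p q
    have hmain : ∫ ω, T ω p * T ω q ∂P = ∫ x, sc g x p * sc g x q ∂σ := by
      have hexp : ∀ ω : Ω, T ω p * T ω q
          = ∑ i, ∑ j, (w i * w j) * (sc g (V i ω) p * sc g (V j ω) q) := by
        intro ω
        rw [hTp ω p, hTp ω q, Finset.sum_mul_sum]
        refine Finset.sum_congr rfl fun i _ => Finset.sum_congr rfl fun j _ => by ring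
      calc ∫ ω, T ω p * T ω q ∂P
          = ∑ i, ∑ j, ∫ ω, (w i * w j) * (sc g (V i ω) p * sc g (V j ω) q) ∂P := by
            simp only [hexp]
            rw [integral_finset_sum _ (fun i _ => integrable_finset_sum _
              (fun j _ => ((hprod_int p q i j).const_mul _)))]
            exact Finset.sum_congr rfl fun i _ =>
              integral_finset_sum _ (fun j _ => (hprod_int p q i j).const_mul _)
        _ = ∑ i, ∑ j, (w i * w j) *
              (if i = j then ∫ x, sc g x p * sc g x q ∂σ else 0) := by
            refine Finset.sum_congr rfl fun i _ => Finset.sum_congr rfl fun j _ => ?_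
            rw [integral_const_mul, hkey p q i j]
        _ = ∑ i, (w i) ^ 2 * ∫ x, sc g x p * sc g x q ∂σ := by
            refine Finset.sum_congr rfl fun i _ => ?_
            rw [Finset.sum_eq_single i]
            · rw [if_pos rfl]; ring
            · intro j _ hji
              rw [if_neg (Ne.symm hji), mul_zero]
            · intro h
              exact absurd (Finset.mem_univ i) h
        _ = ∫ x, sc g x p * sc g x q ∂σ := by
            rw [← Finset.sum_mul, hw2, one_mul]
    constructor
    · rintro rfl
      rw [hmain]
      exact sc_cov_diag σ hrot hatom g hg hmom hd p
    · intro hpq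
      rw [hmain]
      exact sc_cov_offdiag σ hrot hatom g hg hmom hpq
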